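/- The function φ(x) = 1 - (1/√(4πx)) ∫_ℝ tanh(u/2) · exp(-(u - x)²/(4x)) du is continuous and strictly monotonically decreasing on (0, ∞), and tends to 0 as x → ∞. -/

import Mathlib

open MeasureTheory

noncomputable def phi (x : ℝ) : ℝ :=
  if x = 0 then 1
  else 1 - (1 / Real.sqrt (4 * Real.pi * x)) *
    ∫ u : ℝ, Real.tanh (u / 2) * Real.exp (-(u - x) ^ 2 / (4 * x))

open Real Filter Set


-- basic tanh lemmas
lemma tanh_eq (x : ℝ) : Real.tanh x = Real.sinh x / Real.cosh x := Real.tanh_eq_sinh_div_cosh x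

lemma abs_tanh_lt_one (x : ℝ) : |Real.tanh x| < 1 := by
  rw [_root_.tanh_eq, abs_div, abs_of_pos (Real.cosh_pos x), div_lt_one (Real.cosh_pos x)]
  have h := Real.cosh_sq_sub_sinh_sq x
  nlinarith [Real.cosh_pos x, abs_nonneg (Real.sinh x), sq_abs (Real.sinh x)]

lemma tanh_lt_one (x : ℝ) : Real.tanh x < 1 := (abs_lt.1 (_root_.abs_tanh_lt_one x)).2

lemma abs_tanh_le_one (x : ℝ) : |Real.tanh x| ≤ 1 := (_root_.abs_tanh_lt_one x).le

lemma hasDerivAt_tanh (x : ℝ) : HasDerivAt Real.tanh (1 - Real.tanh x ^ 2) x := by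
  have h : HasDerivAt Real.tanh
      ((Real.cosh x * Real.cosh x - Real.sinh x * Real.sinh x) / Real.cosh x ^ 2) x := by
    have := (Real.hasDerivAt_sinh x).div (Real.hasDerivAt_cosh x) (Real.cosh_pos x).ne'
    have heq : Real.tanh = fun y => Real.sinh y / Real.cosh y := funext Real.tanh_eq_sinh_div_cosh
    rw [heq]
    exact this
  convert h using 1
  have h1 := Real.cosh_sq_sub_sinh_sq x
  have h2 := (Real.cosh_pos x).ne'
  field_simp [_root_.tanh_eq]
  rw [_root_.tanh_eq, div_pow, sub_mul, div_mul_cancel₀ _ (pow_ne_zero 2 h2), one_mul]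

lemma continuous_tanh : Continuous Real.tanh := by
  have : ∀ x, HasDerivAt Real.tanh (1 - Real.tanh x ^ 2) x := hasDerivAt_tanh
  exact continuous_iff_continuousAt.2 fun x => (this x).continuousAt

lemma tanh_tendsto_one : Tendsto Real.tanh atTop (nhds 1) := by
  have heq : ∀ x : ℝ, Real.tanh x = 1 - 2 / (Real.exp (2 * x) + 1) := by
    intro x
    have h1 : Real.exp x ≠ 0 := (Real.exp_pos x).ne'
    have h2 : Real.exp (2 * x) + 1 ≠ 0 := by positivity
    rw [_root_.tanh_eq, Real.sinh_eq, Real.cosh_eq]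
    rw [Real.exp_neg]
    have h3 : Real.exp (2*x) = Real.exp x * Real.exp x := by
      rw [← Real.exp_add]; ring_nf
    field_simp
    nlinarith [h3]
  have : Tendsto (fun x : ℝ => 1 - 2 / (Real.exp (2 * x) + 1)) atTop (nhds 1) := by
    have h2 : Tendsto (fun x : ℝ => Real.exp (2 * x) + 1) atTop atTop :=
      (Real.tendsto_exp_atTop.comp (tendsto_id.const_mul_atTop two_pos)).atTop_add tendsto_const_nhds
    have := (tendsto_const_nhds (α := ℝ) (x := (2:ℝ))).div_atTop h2
    simpa using (tendsto_const_nhds (α := ℝ) (x := (1:ℝ))).sub this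
  exact this.congr fun x => (heq x).symm


lemma sq_tanh_lt_one (x : ℝ) : Real.tanh x ^ 2 < 1 := by
  have h := _root_.abs_tanh_lt_one x
  have h0 := abs_nonneg (Real.tanh x)
  nlinarith [sq_abs (Real.tanh x)]



section part2

lemma gauss_integrable : Integrable fun t : ℝ => Real.exp (-t ^ 2) := by
  simpa using integrable_exp_neg_mul_sq one_pos

lemma abs_gauss_integrable : Integrable fun t : ℝ => |t| * Real.exp (-t ^ 2) := by
  have h := (integrable_mul_exp_neg_mul_sq one_pos).abs
  refine h.congr (Eventually.of_forall fun t => ?_)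
  simp only []
  rw [abs_mul, abs_of_pos (Real.exp_pos _)]
  norm_num

lemma lin_gauss_integrable (c : ℝ) :
    Integrable fun t : ℝ => (c + |t|) * Real.exp (-t ^ 2) := by
  have h1 : Integrable fun t : ℝ => c * Real.exp (-t ^ 2) := gauss_integrable.const_mul c
  exact (h1.add abs_gauss_integrable).congr
    (Eventually.of_forall fun t => by simp [add_mul])

/-- Integrability from a (c+|t|)·gaussian bound. -/
lemma integrable_of_lin_gauss_bound {f : ℝ → ℝ} (hf : Continuous f) (c : ℝ)
    (h : ∀ t, |f t| ≤ (c + |t|) * Real.exp (-t ^ 2)) : Integrable f := by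
  exact (lin_gauss_integrable c).mono' hf.aestronglyMeasurable
    (Eventually.of_forall fun t => by simpa using h t)

end part2




section part3

lemma sq_tanh_le_one (x : ℝ) : Real.tanh x ^ 2 ≤ 1 := by
  have h := abs_tanh_le_one x
  calc Real.tanh x ^ 2 = |Real.tanh x| ^ 2 := (sq_abs _).symm
    _ ≤ 1 ^ 2 := pow_le_pow_left₀ (abs_nonneg _) h 2
    _ = 1 := one_pow 2

lemma hasDerivAt_inner (t s : ℝ) :
    HasDerivAt (fun s : ℝ => s ^ 2 / 2 + s * t) (s + t) s := by
  have h1 : HasDerivAt (fun s : ℝ => s ^ 2 / 2) s s := by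
    simpa using (hasDerivAt_pow 2 s).div_const 2
  exact (by simpa using h1.add ((hasDerivAt_id s).mul_const t) :
    HasDerivAt ((fun s : ℝ => s ^ 2 / 2) + fun y => y * t) (s + t) s)

lemma hasDerivAt_F (t s : ℝ) :
    HasDerivAt (fun s : ℝ => Real.tanh (s ^ 2 / 2 + s * t) * Real.exp (-t ^ 2))
      ((s + t) * (1 - Real.tanh (s ^ 2 / 2 + s * t) ^ 2) * Real.exp (-t ^ 2)) s := by
  have h := (hasDerivAt_tanh (s ^ 2 / 2 + s * t)).comp s (hasDerivAt_inner t s)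
  have := h.mul_const (Real.exp (-t ^ 2))
  refine this.congr_deriv ?_
  ring

lemma cont_F (s : ℝ) :
    Continuous fun t : ℝ => Real.tanh (s ^ 2 / 2 + s * t) * Real.exp (-t ^ 2) := by
  have h := continuous_tanh.comp (show Continuous fun t : ℝ => s ^ 2 / 2 + s * t by continuity)
  exact h.mul (by continuity)

lemma cont_F' (s : ℝ) :
    Continuous fun t : ℝ =>
      (s + t) * (1 - Real.tanh (s ^ 2 / 2 + s * t) ^ 2) * Real.exp (-t ^ 2) := by
  have h := continuous_tanh.comp (show Continuous fun t : ℝ => s ^ 2 / 2 + s * t by continuity)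
  exact (continuous_const.add continuous_id).mul
    ((continuous_const.sub (h.pow 2))) |>.mul (by continuity)

lemma F_integrable (s : ℝ) :
    Integrable fun t : ℝ => Real.tanh (s ^ 2 / 2 + s * t) * Real.exp (-t ^ 2) := by
  refine integrable_of_lin_gauss_bound (cont_F s) 1 fun t => ?_
  rw [abs_mul, abs_of_pos (Real.exp_pos _)]
  have h1 := abs_tanh_le_one (s ^ 2 / 2 + s * t)
  have h2 := (Real.exp_pos (-t ^ 2)).le
  nlinarith [abs_nonneg t]

lemma F'_abs_le (s t : ℝ) :
    |(s + t) * (1 - Real.tanh (s ^ 2 / 2 + s * t) ^ 2) * Real.exp (-t ^ 2)|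
      ≤ (|s| + |t|) * Real.exp (-t ^ 2) := by
  rw [abs_mul, abs_mul, abs_of_pos (Real.exp_pos _)]
  have h1 : |1 - Real.tanh (s ^ 2 / 2 + s * t) ^ 2| ≤ 1 := by
    rw [abs_of_nonneg (by nlinarith [sq_tanh_le_one (s ^ 2 / 2 + s * t)])]
    nlinarith [sq_nonneg (Real.tanh (s ^ 2 / 2 + s * t))]
  have h2 : |s + t| ≤ |s| + |t| := abs_add_le s t
  have h3 := (Real.exp_pos (-t ^ 2)).le
  have h4 : |s + t| * |1 - Real.tanh (s ^ 2 / 2 + s * t) ^ 2| ≤ (|s| + |t|) * 1 :=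
    mul_le_mul h2 h1 (abs_nonneg _) (by positivity)
  calc |s + t| * |1 - Real.tanh (s ^ 2 / 2 + s * t) ^ 2| * Real.exp (-t ^ 2)
      ≤ ((|s| + |t|) * 1) * Real.exp (-t ^ 2) := mul_le_mul_of_nonneg_right h4 h3
    _ = (|s| + |t|) * Real.exp (-t ^ 2) := by ring

lemma F'_integrable (s : ℝ) :
    Integrable fun t : ℝ =>
      (s + t) * (1 - Real.tanh (s ^ 2 / 2 + s * t) ^ 2) * Real.exp (-t ^ 2) := by
  refine integrable_of_lin_gauss_bound (cont_F' s) |s| fun t => F'_abs_le s t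

/-- The unnormalized integral. -/
noncomputable def Igr (s : ℝ) : ℝ :=
  ∫ t : ℝ, Real.tanh (s ^ 2 / 2 + s * t) * Real.exp (-t ^ 2)

lemma hasDerivAt_Igr (s₀ : ℝ) :
    HasDerivAt Igr
      (∫ t : ℝ, (s₀ + t) * (1 - Real.tanh (s₀ ^ 2 / 2 + s₀ * t) ^ 2) * Real.exp (-t ^ 2)) s₀ := by
  have key := hasDerivAt_integral_of_dominated_loc_of_deriv_le (μ := volume)
      (F := fun s t => Real.tanh (s ^ 2 / 2 + s * t) * Real.exp (-t ^ 2))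
      (F' := fun s t => (s + t) * (1 - Real.tanh (s ^ 2 / 2 + s * t) ^ 2) * Real.exp (-t ^ 2))
      (x₀ := s₀) (bound := fun t => (|s₀| + 1 + |t|) * Real.exp (-t ^ 2))
      (Metric.ball_mem_nhds s₀ one_pos)
      (Eventually.of_forall fun s => (cont_F s).aestronglyMeasurable)
      (F_integrable s₀)
      ((cont_F' s₀).aestronglyMeasurable)
      ?_ (lin_gauss_integrable (|s₀| + 1))
      (Eventually.of_forall fun t s _ => hasDerivAt_F t s)
  · exact key.2
  · refine Eventually.of_forall fun t s hs => ?_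
    have h1 := F'_abs_le s t
    have h2 : |s| ≤ |s₀| + 1 := by
      have := mem_ball_iff_norm.1 hs
      have h3 : |s - s₀| < 1 := by simpa [Real.norm_eq_abs] using this
      have := abs_sub_abs_le_abs_sub s s₀
      linarith
    have h3 := (Real.exp_pos (-t ^ 2)).le
    calc ‖(s + t) * (1 - Real.tanh (s ^ 2 / 2 + s * t) ^ 2) * Real.exp (-t ^ 2)‖
        = |(s + t) * (1 - Real.tanh (s ^ 2 / 2 + s * t) ^ 2) * Real.exp (-t ^ 2)| := rfl
      _ ≤ (|s| + |t|) * Real.exp (-t ^ 2) := h1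
      _ ≤ (|s₀| + 1 + |t|) * Real.exp (-t ^ 2) := by nlinarith

end part3




section part4

-- whole-line FTC : if G' integrable and G → 0 at ±∞, then ∫ G' = 0
lemma integral_deriv_eq_zero {G g : ℝ → ℝ} (hd : ∀ t, HasDerivAt G (g t) t)
    (hi : Integrable g) (htop : Tendsto G atTop (nhds 0))
    (hbot : Tendsto G atBot (nhds 0)) : ∫ t : ℝ, g t = 0 := by
  have h1 : ∫ t in Iic (0:ℝ), g t = G 0 - 0 :=
    integral_Iic_of_hasDerivAt_of_tendsto' (fun x _ => hd x) hi.integrableOn hbot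
  have h2 : ∫ t in Ioi (0:ℝ), g t = 0 - G 0 :=
    integral_Ioi_of_hasDerivAt_of_tendsto' (fun x _ => hd x) hi.integrableOn htop
  have h3 := intervalIntegral.integral_Iic_add_Ioi (b := (0:ℝ)) (μ := volume)
    hi.integrableOn hi.integrableOn
  rw [h1, h2] at h3
  linarith [h3]

-- gaussian tail limits
lemma gauss_tendsto_top : Tendsto (fun t : ℝ => Real.exp (-t ^ 2)) atTop (nhds 0) := by
  have h0 : Tendsto (fun t : ℝ => t ^ 2) atTop atTop := tendsto_pow_atTop (by norm_num : 2 ≠ 0)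
  have h : Tendsto (fun t : ℝ => -t ^ 2) atTop atBot := tendsto_neg_atTop_atBot.comp h0
  exact Real.tendsto_exp_atBot.comp h

lemma gauss_tendsto_bot : Tendsto (fun t : ℝ => Real.exp (-t ^ 2)) atBot (nhds 0) := by
  have h2 : Tendsto (fun t : ℝ => t ^ 2) atBot atTop := by
    have h := (tendsto_pow_atTop (n := 2) (by norm_num : 2 ≠ 0)).comp
      (tendsto_abs_atBot_atTop (G := ℝ))
    exact h.congr fun t => sq_abs t
  have h3 : Tendsto (fun t : ℝ => -t ^ 2) atBot atBot := tendsto_neg_atTop_atBot.comp h2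
  exact Real.tendsto_exp_atBot.comp h3

end part4




section part5

variable (s : ℝ)

noncomputable def T (s t : ℝ) : ℝ := Real.tanh (s ^ 2 / 2 + s * t)

lemma cont_T : Continuous (T s) :=
  continuous_tanh.comp (by continuity)

lemma sq_T_le_one (t : ℝ) : T s t ^ 2 ≤ 1 := sq_tanh_le_one _
lemma sq_T_lt_one (t : ℝ) : T s t ^ 2 < 1 := sq_tanh_lt_one _
lemma T_lt_one (t : ℝ) : T s t < 1 := _root_.tanh_lt_one _
lemma abs_T_le_one (t : ℝ) : |T s t| ≤ 1 := abs_tanh_le_one _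

lemma hasDerivAt_T (t : ℝ) : HasDerivAt (T s) ((1 - T s t ^ 2) * s) t := by
  have hy : HasDerivAt (fun t : ℝ => s ^ 2 / 2 + s * t) s t := by
    exact (by simpa using (hasDerivAt_const t (s ^ 2 / 2)).add ((hasDerivAt_id t).const_mul s) :
      HasDerivAt ((fun _ => s ^ 2 / 2) + fun y => s * y) s t)
  exact (hasDerivAt_tanh (s ^ 2 / 2 + s * t)).comp t hy

lemma hasDerivAt_gaussK (t : ℝ) :
    HasDerivAt (fun t : ℝ => Real.exp (-t ^ 2)) (Real.exp (-t ^ 2) * (-(2 * t))) t := by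
  have hneg : HasDerivAt (fun t : ℝ => -t ^ 2) (-(2 * t)) t := by
    exact (by simpa using (hasDerivAt_pow 2 t).neg : HasDerivAt (-fun x : ℝ => x ^ 2) (-(2 * t)) t)
  exact (Real.hasDerivAt_exp (-t ^ 2)).comp t hneg

/-- Gaussian integration by parts (Stein identity). -/
lemma stein :
    ∫ t : ℝ, (s + t) * (1 - T s t ^ 2) * Real.exp (-t ^ 2)
      = s * ∫ t : ℝ, (1 - T s t ^ 2) * (1 - T s t) * Real.exp (-t ^ 2) := by
  set G : ℝ → ℝ := fun t => -(1 / 2) * ((1 - T s t ^ 2) * Real.exp (-t ^ 2)) with hG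
  set g : ℝ → ℝ := fun t => (s * T s t + t) * (1 - T s t ^ 2) * Real.exp (-t ^ 2) with hg
  have cB : Continuous fun t : ℝ => (1 - T s t ^ 2) * (1 - T s t) * Real.exp (-t ^ 2) := by
    have := cont_T s
    continuity
  have cg : Continuous g := by
    have := cont_T s
    simp only [hg]
    continuity
  have hd : ∀ t, HasDerivAt G (g t) t := by
    intro t
    have h1 := hasDerivAt_T s t
    have h2 : HasDerivAt (fun t => 1 - T s t ^ 2)
        (-(2 * T s t ^ 1 * ((1 - T s t ^ 2) * s))) t := by
      exact (by simpa using (hasDerivAt_const t (1:ℝ)).sub (h1.pow 2) :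
        HasDerivAt ((fun _ => (1:ℝ)) - T s ^ 2) (-(2 * T s t ^ 1 * ((1 - T s t ^ 2) * s))) t)
    have h3 := (h2.mul (hasDerivAt_gaussK t)).const_mul (-(1/2) : ℝ)
    refine h3.congr_deriv ?_
    simp only [hg]
    ring
  have hgi : Integrable g := by
    refine integrable_of_lin_gauss_bound cg |s| fun t => ?_
    simp only [hg]
    rw [abs_mul, abs_mul, abs_of_pos (Real.exp_pos _)]
    have h1 : |s * T s t + t| ≤ |s| + |t| := by
      have := abs_add_le (s * T s t) t
      have h2 : |s * T s t| ≤ |s| := by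
        rw [abs_mul]
        calc |s| * |T s t| ≤ |s| * 1 := by
              have := abs_T_le_one s t
              exact mul_le_mul_of_nonneg_left this (abs_nonneg s)
          _ = |s| := mul_one _
      linarith
    have h2 : |1 - T s t ^ 2| ≤ 1 := by
      rw [abs_of_nonneg (by linarith [sq_T_le_one s t] : (0:ℝ) ≤ 1 - T s t ^ 2)]
      nlinarith [sq_nonneg (T s t)]
    have h3 := (Real.exp_pos (-t ^ 2)).le
    calc |s * T s t + t| * |1 - T s t ^ 2| * Real.exp (-t ^ 2)
        ≤ ((|s| + |t|) * 1) * Real.exp (-t ^ 2) := by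
          exact mul_le_mul_of_nonneg_right
            (mul_le_mul h1 h2 (abs_nonneg _) (by positivity)) h3
      _ = (|s| + |t|) * Real.exp (-t ^ 2) := by ring
  have hGbound : ∀ t, ‖G t‖ ≤ Real.exp (-t ^ 2) := by
    intro t
    have h0 : (0:ℝ) ≤ 1 - T s t ^ 2 := by linarith [sq_T_le_one s t]
    have h1 : 1 - T s t ^ 2 ≤ 1 := by nlinarith [sq_nonneg (T s t)]
    have h2 := (Real.exp_pos (-t ^ 2)).le
    simp only [hG, Real.norm_eq_abs]
    rw [abs_mul, abs_mul, abs_of_nonneg h0, abs_of_pos (Real.exp_pos _)]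
    have : |(-(1/2) : ℝ)| = 1/2 := by norm_num
    rw [this]
    nlinarith
  have htop : Tendsto G atTop (nhds 0) := squeeze_zero_norm hGbound gauss_tendsto_top
  have hbot : Tendsto G atBot (nhds 0) := squeeze_zero_norm hGbound gauss_tendsto_bot
  have hz : ∫ t : ℝ, g t = 0 := integral_deriv_eq_zero hd hgi htop hbot
  have hBi : Integrable fun t : ℝ => (1 - T s t ^ 2) * (1 - T s t) * Real.exp (-t ^ 2) := by
    refine integrable_of_lin_gauss_bound cB 2 fun t => ?_
    rw [abs_mul, abs_mul, abs_of_pos (Real.exp_pos _)]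
    have h2 : |1 - T s t ^ 2| ≤ 1 := by
      rw [abs_of_nonneg (by linarith [sq_T_le_one s t] : (0:ℝ) ≤ 1 - T s t ^ 2)]
      nlinarith [sq_nonneg (T s t)]
    have h3 : |1 - T s t| ≤ 2 := by
      have := abs_T_le_one s t
      have : |T s t| ≤ 1 := this
      rw [abs_sub_comm]
      calc |T s t - 1| ≤ |T s t| + 1 := by
            have := abs_sub_abs_le_abs_sub (T s t) (1:ℝ)
            have := abs_add_le (T s t) (-1 : ℝ)
            simpa [sub_eq_add_neg] using this
        _ ≤ 2 := by linarith
    have h4 := (Real.exp_pos (-t ^ 2)).le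
    calc |1 - T s t ^ 2| * |1 - T s t| * Real.exp (-t ^ 2)
        ≤ (1 * 2) * Real.exp (-t ^ 2) := by
          exact mul_le_mul_of_nonneg_right
            (mul_le_mul h2 h3 (abs_nonneg _) (by norm_num)) h4
      _ ≤ (2 + |t|) * Real.exp (-t ^ 2) := by nlinarith [abs_nonneg t]
  have hAi : Integrable fun t : ℝ => (s + t) * (1 - T s t ^ 2) * Real.exp (-t ^ 2) :=
    F'_integrable s
  have key : (∫ t : ℝ, (s + t) * (1 - T s t ^ 2) * Real.exp (-t ^ 2))
      - s * ∫ t : ℝ, (1 - T s t ^ 2) * (1 - T s t) * Real.exp (-t ^ 2) = 0 := by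
    rw [← MeasureTheory.integral_const_mul]
    rw [← integral_sub hAi (hBi.const_mul s)]
    rw [← hz]
    congr 1
    funext t
    simp only [hg, T]
    ring
  linarith [key]

/-- positivity of the Stein factor -/
lemma stein_pos :
    0 < ∫ t : ℝ, (1 - T s t ^ 2) * (1 - T s t) * Real.exp (-t ^ 2) := by
  have hpos : ∀ t : ℝ, 0 < (1 - T s t ^ 2) * (1 - T s t) * Real.exp (-t ^ 2) := by
    intro t
    have h1 := sq_T_lt_one s t
    have h2 := T_lt_one s t
    have h3 := Real.exp_pos (-t ^ 2)
    have hh1 : (0:ℝ) < 1 - T s t ^ 2 := sub_pos.mpr h1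
    have hh2 : (0:ℝ) < 1 - T s t := sub_pos.mpr h2
    positivity
  have cB : Continuous fun t : ℝ => (1 - T s t ^ 2) * (1 - T s t) * Real.exp (-t ^ 2) := by
    have := cont_T s
    continuity
  have hBi : Integrable fun t : ℝ => (1 - T s t ^ 2) * (1 - T s t) * Real.exp (-t ^ 2) := by
    refine integrable_of_lin_gauss_bound cB 2 fun t => ?_
    rw [abs_mul, abs_mul, abs_of_pos (Real.exp_pos _)]
    have h2 : |1 - T s t ^ 2| ≤ 1 := by
      rw [abs_of_nonneg (by linarith [sq_T_le_one s t] : (0:ℝ) ≤ 1 - T s t ^ 2)]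
      nlinarith [sq_nonneg (T s t)]
    have h3 : |1 - T s t| ≤ 2 := by
      have h := abs_T_le_one s t
      rw [abs_sub_comm]
      have := abs_add_le (T s t) (-1 : ℝ)
      have h5 : |T s t - 1| ≤ |T s t| + 1 := by simpa [sub_eq_add_neg] using this
      have h6 : |T s t| ≤ 1 := h
      linarith
    have h4 := (Real.exp_pos (-t ^ 2)).le
    calc |1 - T s t ^ 2| * |1 - T s t| * Real.exp (-t ^ 2)
        ≤ (1 * 2) * Real.exp (-t ^ 2) := by
          exact mul_le_mul_of_nonneg_right
            (mul_le_mul h2 h3 (abs_nonneg _) (by norm_num)) h4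
      _ ≤ (2 + |t|) * Real.exp (-t ^ 2) := by nlinarith [abs_nonneg t]
  rw [integral_pos_iff_support_of_nonneg_ae
    (Eventually.of_forall fun t => (hpos t).le) hBi]
  have hsupp : Function.support
      (fun t : ℝ => (1 - T s t ^ 2) * (1 - T s t) * Real.exp (-t ^ 2)) = univ :=
    Set.eq_univ_iff_forall.mpr fun t => (hpos t).ne'
  rw [hsupp, Real.volume_univ]
  exact ENNReal.zero_lt_top

end part5


lemma stein_tanh (s : ℝ) :
    ∫ t : ℝ, (s + t) * (1 - Real.tanh (s ^ 2 / 2 + s * t) ^ 2) * Real.exp (-t ^ 2)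
      = s * ∫ t : ℝ, (1 - Real.tanh (s ^ 2 / 2 + s * t) ^ 2) * (1 - Real.tanh (s ^ 2 / 2 + s * t))
          * Real.exp (-t ^ 2) := stein s

lemma stein_pos_tanh (s : ℝ) :
    0 < ∫ t : ℝ, (1 - Real.tanh (s ^ 2 / 2 + s * t) ^ 2) * (1 - Real.tanh (s ^ 2 / 2 + s * t))
          * Real.exp (-t ^ 2) := stein_pos s







section part6

noncomputable def gfun (s : ℝ) : ℝ := (Real.sqrt Real.pi)⁻¹ * Igr s

lemma sqrt_pi_pos : 0 < Real.sqrt Real.pi := Real.sqrt_pos.mpr Real.pi_pos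

lemma hasDerivAt_gfun (s : ℝ) : HasDerivAt gfun
    ((Real.sqrt Real.pi)⁻¹ *
      ∫ t : ℝ, (s + t) * (1 - Real.tanh (s ^ 2 / 2 + s * t) ^ 2) * Real.exp (-t ^ 2)) s :=
  (hasDerivAt_Igr s).const_mul _

lemma deriv_gfun_pos {s : ℝ} (hs : 0 < s) : 0 < deriv gfun s := by
  rw [(hasDerivAt_gfun s).deriv]
  have h1 := stein_pos_tanh s
  have h2 := stein_tanh s
  rw [h2]
  positivity

lemma continuous_gfun : Continuous gfun :=
  continuous_iff_continuousAt.2 fun s => (hasDerivAt_gfun s).continuousAt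

lemma strictMonoOn_gfun : StrictMonoOn gfun (Set.Ioi 0) := by
  apply strictMonoOn_of_deriv_pos (convex_Ioi 0) continuous_gfun.continuousOn
  intro x hx
  rw [interior_Ioi] at hx
  exact deriv_gfun_pos hx

/-- substitution: phi x = 1 - gfun (√x) for x > 0 -/
lemma phi_eq {x : ℝ} (hx : 0 < x) : phi x = 1 - gfun (Real.sqrt x) := by
  have hx0 : x ≠ 0 := hx.ne'
  have hsx : 0 < Real.sqrt x := Real.sqrt_pos.mpr hx
  rw [phi, if_neg hx0]
  set f : ℝ → ℝ := fun u => Real.tanh (u / 2) * Real.exp (-(u - x) ^ 2 / (4 * x)) with hf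
  have step1 : ∫ u : ℝ, f (u + x) = ∫ u : ℝ, f u := integral_add_right_eq_self f x
  have step2 : ∫ t : ℝ, f (2 * Real.sqrt x * t + x)
      = |(2 * Real.sqrt x)⁻¹| • ∫ u : ℝ, f (u + x) := by
    have := MeasureTheory.Measure.integral_comp_mul_left
      (fun u : ℝ => f (u + x)) (2 * Real.sqrt x)
    simpa [mul_comm, mul_assoc, add_comm] using this
  have habs : |(2 * Real.sqrt x)⁻¹| = (2 * Real.sqrt x)⁻¹ := by
    rw [abs_of_pos]; positivity
  have step3 : ∀ t : ℝ, f (2 * Real.sqrt x * t + x)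
      = Real.tanh (Real.sqrt x ^ 2 / 2 + Real.sqrt x * t) * Real.exp (-t ^ 2) := by
    intro t
    have hsq : Real.sqrt x ^ 2 = x := Real.sq_sqrt hx.le
    simp only [hf]
    congr 1
    · congr 1
      field_simp [hsq]
      linarith [hsq]
    · congr 1
      have : (2 * Real.sqrt x * t + x - x) ^ 2 = 4 * x * t ^ 2 := by
        rw [add_sub_cancel_right]
        nlinarith [hsq]
      rw [this]
      field_simp
  have key : ∫ u : ℝ, f u = (2 * Real.sqrt x) * Igr (Real.sqrt x) := by
    rw [← step1, ← smul_eq_mul, eq_comm]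
    rw [Igr]
    have : ∫ t : ℝ, Real.tanh (Real.sqrt x ^ 2 / 2 + Real.sqrt x * t) * Real.exp (-t ^ 2)
        = ∫ t : ℝ, f (2 * Real.sqrt x * t + x) := by
      congr 1; funext t; rw [step3 t]
    rw [this, step2, habs, smul_eq_mul, smul_eq_mul, ← mul_assoc]
    rw [mul_inv_cancel₀ (by positivity : (2 * Real.sqrt x) ≠ 0), one_mul]
  rw [key, gfun]
  have hcoef : 1 / Real.sqrt (4 * Real.pi * x) * (2 * Real.sqrt x) = (Real.sqrt Real.pi)⁻¹ := by
    have h4 : Real.sqrt (4 * Real.pi * x)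
        = 2 * Real.sqrt Real.pi * Real.sqrt x := by
      rw [show (4 : ℝ) * Real.pi * x = 4 * (Real.pi * x) by ring]
      rw [Real.sqrt_mul (by norm_num : (0:ℝ) ≤ 4), Real.sqrt_mul Real.pi_pos.le]
      rw [show Real.sqrt 4 = 2 by
        rw [show (4:ℝ) = 2 ^ 2 by norm_num, Real.sqrt_sq (by norm_num : (0:ℝ) ≤ 2)]]
      ring
    rw [h4]
    field_simp
  rw [← mul_assoc, hcoef]

/-- atTop limit of Igr -/
lemma Igr_tendsto : Tendsto Igr atTop (nhds (Real.sqrt Real.pi)) := by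
  have hInt : ∫ t : ℝ, Real.exp (-t ^ 2) = Real.sqrt Real.pi := by
    simpa using integral_gaussian 1
  rw [← hInt]
  apply tendsto_integral_filter_of_dominated_convergence
    (bound := fun t : ℝ => Real.exp (-t ^ 2))
  · exact Eventually.of_forall fun s => (cont_F s).aestronglyMeasurable
  · refine Eventually.of_forall fun s => Eventually.of_forall fun t => ?_
    rw [Real.norm_eq_abs, abs_mul, abs_of_pos (Real.exp_pos _)]
    have h := abs_tanh_le_one (s ^ 2 / 2 + s * t)
    nlinarith [Real.exp_pos (-t ^ 2), abs_nonneg (Real.tanh (s ^ 2 / 2 + s * t))]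
  · exact gauss_integrable
  · refine Eventually.of_forall fun t => ?_
    have harg : Tendsto (fun s : ℝ => s ^ 2 / 2 + s * t) atTop atTop := by
      have h1 : Tendsto (fun s : ℝ => (s + t) ^ 2 / 2 - t ^ 2 / 2) atTop atTop := by
        apply tendsto_atTop_add_const_right
        apply Tendsto.atTop_div_const (by norm_num : (0:ℝ) < 2)
        exact (tendsto_pow_atTop (by norm_num : 2 ≠ 0)).comp
          (tendsto_atTop_add_const_right atTop t tendsto_id)
      exact h1.congr fun s => by ring
    have := tanh_tendsto_one.comp harg
    simpa using this.mul_const (Real.exp (-t ^ 2))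

lemma gfun_tendsto : Tendsto gfun atTop (nhds 1) := by
  have := Igr_tendsto.const_mul (Real.sqrt Real.pi)⁻¹
  exact (by simpa [inv_mul_cancel₀ sqrt_pi_pos.ne'] using this :
    Tendsto (fun x => (Real.sqrt Real.pi)⁻¹ * Igr x) atTop (nhds 1))

lemma sqrt_tendsto_atTop : Tendsto Real.sqrt atTop atTop := by
  apply tendsto_atTop_atTop.2
  intro b
  refine ⟨(max b 0) ^ 2, fun a ha => ?_⟩
  have h1 : max b 0 ≤ Real.sqrt a := by
    rw [show Real.sqrt a = Real.sqrt a from rfl]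
    have := Real.sqrt_le_sqrt ha
    calc max b 0 = Real.sqrt ((max b 0) ^ 2) := (Real.sqrt_sq (le_max_right b 0)).symm
      _ ≤ Real.sqrt a := Real.sqrt_le_sqrt ha
  exact le_trans (le_max_left b 0) h1

theorem stmt_9 :
    ContinuousOn phi (Set.Ioi 0) ∧ StrictAntiOn phi (Set.Ioi 0) ∧
      Filter.Tendsto phi Filter.atTop (nhds 0) := by
  refine ⟨?_, ?_, ?_⟩
  · have hc : ContinuousOn (fun x : ℝ => 1 - gfun (Real.sqrt x)) (Set.Ioi 0) :=
      (continuous_const.sub (continuous_gfun.comp Real.continuous_sqrt)).continuousOn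
    exact hc.congr fun x hx => phi_eq hx
  · intro x hx y hy hxy
    rw [phi_eq hx, phi_eq hy]
    have h1 : Real.sqrt x < Real.sqrt y := Real.sqrt_lt_sqrt (le_of_lt hx) hxy
    have h2 : gfun (Real.sqrt x) < gfun (Real.sqrt y) :=
      strictMonoOn_gfun (Real.sqrt_pos.mpr hx) (Real.sqrt_pos.mpr (hx.trans hxy)) h1
    linarith
  · have h1 : Tendsto (fun x : ℝ => 1 - gfun (Real.sqrt x)) atTop (nhds 0) := by
      have := gfun_tendsto.comp sqrt_tendsto_atTop
      have h2 := this.const_sub 1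
      simpa using h2
    apply h1.congr' _
    filter_upwards [eventually_gt_atTop (0:ℝ)] with x hx
    exact (phi_eq hx).symm

end part6
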